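/- arXiv:0911.0027 — 2 statements merged into one kernel-verified Lean document; each statement's English description precedes it below -/
import Mathlib

section
/- Let K be a nonempty compact metric space, f ∈ C(K, ℝ), and let μ be a finite signed (real-valued, σ-additive) Borel measure on K such that for every g ∈ C(K, ℝ) one has max_K g − max_K f ≥ ∫_K (g − f) dμ. Then μ is a Borel probability measure concentrated on the arg-maximum set K_f = {t ∈ K : f(t) = max_K f}: namely, μ(A) ≥ 0 for every Borel set A ⊆ K, μ(K) = 1, and μ(K_f) = 1. -/
open MeasureTheory

/-- The integral of a function against a finite signed Borel measure, defined via the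
Jordan decomposition `μ = μ⁺ - μ⁻`. -/
noncomputable def MeasureTheory.SignedMeasure.sintegral {K : Type*} [MeasurableSpace K]
    (μ : SignedMeasure K) (g : K → ℝ) : ℝ :=
  (∫ t, g t ∂μ.toJordanDecomposition.posPart) -
    (∫ t, g t ∂μ.toJordanDecomposition.negPart)

/-- If a finite signed Borel measure `μ` on a nonempty compact metric
space `K` satisfies the subgradient inequality `max g - max f ≥ ∫ (g - f) dμ` for all
`g ∈ C(K, ℝ)`, then `μ` is a probability measure concentrated on the arg-maximum set of
`f`: `μ A ≥ 0` for every Borel set `A`, `μ K = 1`, and `μ K_f = 1`. -/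
theorem signedMeasure_subgradient_is_probability_on_argmax
    {K : Type*} [MetricSpace K] [CompactSpace K] [Nonempty K]
    [MeasurableSpace K] [BorelSpace K]
    (f : C(K, ℝ)) (μ : SignedMeasure K)
    (hsub : ∀ g : C(K, ℝ),
      (⨆ t, g t) - (⨆ t, f t) ≥ μ.sintegral (fun t => g t - f t)) :
    (∀ A : Set K, MeasurableSet A → 0 ≤ μ A) ∧
      μ Set.univ = 1 ∧ μ {t | f t = ⨆ s, f s} = 1 := by
  classical
  set P := μ.toJordanDecomposition.posPart with hPdef
  set N := μ.toJordanDecomposition.negPart with hNdef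
  haveI : IsFiniteMeasure P := by rw [hPdef]; infer_instance
  haveI : IsFiniteMeasure N := by rw [hNdef]; infer_instance
  have hsint : ∀ g : K → ℝ, μ.sintegral g = (∫ t, g t ∂P) - ∫ t, g t ∂N := fun g => rfl
  have hInt : ∀ (ν : Measure K) [IsFiniteMeasure ν] (h : C(K, ℝ)),
      Integrable (fun t => h t) ν := by
    intro ν _ h
    have := (h.continuous.continuousOn.integrableOn_compact (μ := ν) (isCompact_univ (X := K)))
    rwa [integrableOn_univ] at this
  have hbdd : ∀ g : C(K, ℝ), BddAbove (Set.range g) := by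
    intro g
    have := (isCompact_univ (X := K)).bddAbove_image g.continuous.continuousOn
    rwa [Set.image_univ] at this
  -- μ applied to measurable sets
  have happ : ∀ A : Set K, MeasurableSet A → μ A = (P A).toReal - (N A).toReal := by
    intro A hA
    conv_lhs => rw [← μ.toSignedMeasure_toJordanDecomposition]
    rw [JordanDecomposition.toSignedMeasure, Measure.toSignedMeasure_sub_apply hA]
    rfl
  -- Fact A: sintegral h ≤ sup h
  have hA : ∀ h : C(K, ℝ), (∫ t, h t ∂P) - (∫ t, h t ∂N) ≤ ⨆ t, h t := by
    intro h
    have h1 := hsub (f + h)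
    have h2 : (fun t => (f + h) t - f t) = fun t => h t := by
      funext t; simp
    rw [h2, hsint] at h1
    have h3 : (⨆ t, (f + h) t) ≤ (⨆ t, f t) + ⨆ t, h t := by
      refine ciSup_le fun t => ?_
      have := le_ciSup (hbdd f) t
      have := le_ciSup (hbdd h) t
      simp only [ContinuousMap.add_apply]
      exact add_le_add (le_ciSup (hbdd f) t) (le_ciSup (hbdd h) t)
    linarith [h1, h3]
  -- total mass
  have hm : (P Set.univ).toReal - (N Set.univ).toReal = 1 := by
    have hc : ∀ c : ℝ, c * ((P Set.univ).toReal - (N Set.univ).toReal) ≤ c := by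
      intro c
      have := hA (ContinuousMap.const K c)
      simp only [ContinuousMap.const_apply, integral_const, smul_eq_mul, ciSup_const] at this
      simp only [measureReal_def] at this
      linarith [this]
    have h1 := hc 1
    have h2 := hc (-1)
    linarith
  -- for nonneg continuous h, ∫ h dN ≤ ∫ h dP
  have hApos : ∀ h : C(K, ℝ), (∀ t, 0 ≤ h t) → (∫ t, h t ∂N) ≤ ∫ t, h t ∂P := by
    intro h hpos
    have := hA (-h)
    have hs : (⨆ t, (-h) t) ≤ 0 := ciSup_le fun t => by
      simp only [ContinuousMap.neg_apply]; linarith [hpos t]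
    have e1 : (∫ t, (-h) t ∂P) = -∫ t, h t ∂P := by
      simp only [ContinuousMap.neg_apply]; exact integral_neg _
    have e2 : (∫ t, (-h) t ∂N) = -∫ t, h t ∂N := by
      simp only [ContinuousMap.neg_apply]; exact integral_neg _
    rw [e1, e2] at this
    linarith
  -- N = 0
  have hN0 : N = 0 := by
    obtain ⟨S, hSm, hPS, hNS⟩ := μ.toJordanDecomposition.mutuallySingular
    have hNSuniv : N S = N Set.univ := by
      refine le_antisymm (measure_mono (Set.subset_univ S)) ?_
      calc N Set.univ = N (S ∪ Sᶜ) := by rw [Set.union_compl_self]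
        _ ≤ N S + N Sᶜ := measure_union_le _ _
        _ = N S := by rw [hNS, add_zero]
    have key : ∀ ε : ℝ, 0 < ε → (N Set.univ).toReal ≤ 2 * ε := by
      intro ε hε
      have hεne : ENNReal.ofReal ε ≠ 0 := by
        simp [ENNReal.ofReal_eq_zero, not_le, hε]
      obtain ⟨C, hCS, hCcomp, hCN⟩ := hSm.exists_isCompact_lt_add (μ := N)
        (measure_ne_top N S) hεne
      have hPC : P C = 0 := le_antisymm (hPS ▸ measure_mono hCS) zero_le
      have hPClt : P C < ENNReal.ofReal ε := by
        rw [hPC]; exact (ENNReal.ofReal_pos.mpr hε)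
      obtain ⟨U, hCU, hUopen, hPU⟩ := C.exists_isOpen_lt_of_lt _ hPClt
      obtain ⟨h, h0, h1, hicc⟩ := exists_continuous_zero_one_of_isCompact'
        hCcomp hUopen.isClosed_compl
        (Set.disjoint_left.mpr fun x hx hxc => hxc (hCU hx))
      have hCm : MeasurableSet C := hCcomp.isClosed.measurableSet
      have hUm : MeasurableSet U := hUopen.measurableSet
      -- ∫ h dN ≥ (N C).toReal
      have hlow : (N C).toReal ≤ ∫ t, h t ∂N := by
        have hmono : ∀ t, Set.indicator C (fun _ => (1 : ℝ)) t ≤ h t := by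
          intro t
          by_cases ht : t ∈ C
          · rw [Set.indicator_of_mem ht]
            exact le_of_eq (h1 ht).symm
          · rw [Set.indicator_of_notMem ht]
            exact (hicc t).1
        have := integral_mono ((integrable_const (1 : ℝ)).indicator hCm) (hInt N h) hmono
        rwa [integral_indicator_const _ hCm, smul_eq_mul, mul_one] at this
      -- ∫ h dP ≤ (P U).toReal
      have hhigh : (∫ t, h t ∂P) ≤ (P U).toReal := by
        have hmono : ∀ t, h t ≤ Set.indicator U (fun _ => (1 : ℝ)) t := by
          intro t
          by_cases ht : t ∈ U
          · rw [Set.indicator_of_mem ht]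
            exact (hicc t).2
          · rw [Set.indicator_of_notMem ht]
            exact le_of_eq (h0 ht)
        have := integral_mono (hInt P h) ((integrable_const (1 : ℝ)).indicator hUm) hmono
        rwa [integral_indicator_const _ hUm, smul_eq_mul, mul_one] at this
      have hPUr : (P U).toReal ≤ ε := by
        have := ENNReal.toReal_mono (by simp) hPU.le
        rwa [ENNReal.toReal_ofReal hε.le] at this
      have hNCr : (N S).toReal ≤ (N C).toReal + ε := by
        have h1' : N S ≤ N C + ENNReal.ofReal ε := hCN.le
        have h2' : (N C + ENNReal.ofReal ε).toReal = (N C).toReal + ε := by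
          rw [ENNReal.toReal_add (measure_ne_top N C) (by simp), ENNReal.toReal_ofReal hε.le]
        have := ENNReal.toReal_mono (by finiteness) h1'
        rwa [h2'] at this
      have hint := hApos h fun t => (hicc t).1
      calc (N Set.univ).toReal = (N S).toReal := by rw [hNSuniv]
        _ ≤ (N C).toReal + ε := hNCr
        _ ≤ (∫ t, h t ∂N) + ε := by linarith
        _ ≤ (∫ t, h t ∂P) + ε := by linarith
        _ ≤ ε + ε := by linarith
        _ = 2 * ε := by ring
    have hn0 : (N Set.univ).toReal = 0 := by
      have hle : (N Set.univ).toReal ≤ 0 := by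
        by_contra hcon
        push_neg at hcon
        have := key ((N Set.univ).toReal / 4) (by linarith)
        linarith
      linarith [ENNReal.toReal_nonneg (a := N Set.univ)]
    refine Measure.measure_univ_eq_zero.mp ?_
    have hor := (ENNReal.toReal_eq_zero_iff (N Set.univ)).mp hn0
    exact hor.resolve_right (measure_ne_top N Set.univ)
  -- consequences of N = 0
  have hNint : ∀ g : K → ℝ, (∫ t, g t ∂N) = 0 := by
    intro g; rw [hN0]; exact integral_zero_measure _
  have hPuniv : (P Set.univ).toReal = 1 := by
    have : (N Set.univ).toReal = 0 := by rw [hN0]; simp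
    linarith [hm]
  have hnonneg : ∀ A : Set K, MeasurableSet A → 0 ≤ μ A := by
    intro A hA
    rw [happ A hA, hN0]
    simp [ENNReal.toReal_nonneg]
  have huniv : μ Set.univ = 1 := by
    rw [happ _ MeasurableSet.univ, hN0]
    simpa using hPuniv
  refine ⟨hnonneg, huniv, ?_⟩
  -- argmax part
  set M := ⨆ s, f s with hMdef
  have hfM : ∀ t, f t ≤ M := fun t => le_ciSup (hbdd f) t
  have e1 : (∫ t, f t ∂P) ≤ M := by
    have h1 := hsub (f + f)
    have h2 : (fun t => (f + f) t - f t) = fun t => f t := by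
      funext t; simp
    rw [h2, hsint, hNint] at h1
    have h3 : (⨆ t, (f + f) t) ≤ M + M :=
      ciSup_le fun t => by
        simp only [ContinuousMap.add_apply]; exact add_le_add (hfM t) (hfM t)
    rw [sub_zero] at h1
    have := h1
    linarith [h1, h3]
  have e2 : M ≤ ∫ t, f t ∂P := by
    have h1 := hsub 0
    have h2 : (fun t => (0 : C(K, ℝ)) t - f t) = fun t => -(f t) := by
      funext t; simp
    rw [h2, hsint, hNint, sub_zero] at h1
    have h3 : (⨆ t, (0 : C(K, ℝ)) t) = 0 := by
      simp only [ContinuousMap.zero_apply]; exact ciSup_const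
    rw [integral_neg] at h1
    rw [h3] at h1
    linarith [h1]
  have hintf : (∫ t, f t ∂P) = M := le_antisymm e1 e2
  -- ∫ (M - f) dP = 0
  have hzero : (∫ t, (M - f t) ∂P) = 0 := by
    rw [integral_sub (integrable_const M) (hInt P f), integral_const, smul_eq_mul, hintf,
      measureReal_def, hPuniv, one_mul, sub_self]
  have hae : (fun t => M - f t) =ᵐ[P] 0 := by
    rw [← integral_eq_zero_iff_of_nonneg (fun t => sub_nonneg.mpr (hfM t))
      ((integrable_const M).sub (hInt P f))]
    exact hzero
  have hcompl : P {t | f t = M}ᶜ = 0 := by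
    have h' := ae_iff.mp hae
    have hseq : {t : K | ¬ (fun t => M - f t) t = (0 : K → ℝ) t} = {t | f t = M}ᶜ := by
      ext t
      simp [sub_eq_zero]
      tauto
    rwa [hseq] at h'
  have hAm : MeasurableSet {t | f t = M} :=
    (isClosed_eq f.continuous continuous_const).measurableSet
  have hPA : P {t | f t = M} = P Set.univ := by
    refine le_antisymm (measure_mono (Set.subset_univ _)) ?_
    calc P Set.univ = P ({t | f t = M} ∪ {t | f t = M}ᶜ) := by rw [Set.union_compl_self]
      _ ≤ P {t | f t = M} + P {t | f t = M}ᶜ := measure_union_le _ _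
      _ = P {t | f t = M} := by rw [hcompl, add_zero]
  rw [happ _ hAm, hN0]
  simp only [Measure.coe_zero, Pi.zero_apply, ENNReal.toReal_zero, sub_zero]
  rw [hPA]
  exact hPuniv
end

section
/- Let K be a nonempty compact metric space and f ∈ C(K, ℝ). A finite signed (real-valued, σ-additive) Borel measure μ on K satisfies the subgradient inequality max_K g − max_K f ≥ ∫_K (g − f) dμ for all g ∈ C(K, ℝ) if and only if μ is a Borel probability measure on K with μ(K_f) = 1, where K_f = {t ∈ K : f(t) = max_K f} is the arg-maximum set of f. (Via the Riesz–Markov representation of continuous linear functionals on C(K, ℝ) by signed Borel measures, this states that the subdifferential of the maximum functional m(f) = max_K f at f coincides with the set of all probability measures on Argmax_K f.) -/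
open MeasureTheory

set_option linter.unusedSectionVars false

section Aux

variable {K : Type*} [MetricSpace K] [CompactSpace K] [Nonempty K]
    [MeasurableSpace K] [BorelSpace K]

lemma sm_apply_aux (μ : SignedMeasure K) {A : Set K} (hA : MeasurableSet A) :
    μ A = (μ.toJordanDecomposition.posPart A).toReal
        - (μ.toJordanDecomposition.negPart A).toReal := by
  conv_lhs => rw [← μ.toSignedMeasure_toJordanDecomposition]
  rw [MeasureTheory.JordanDecomposition.toSignedMeasure]
  exact Measure.toSignedMeasure_sub_apply hA

lemma cont_integrable_aux (ν : Measure K) [IsFiniteMeasure ν] (g : K → ℝ)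
    (hg : Continuous g) : Integrable g ν :=
  hg.integrable_of_hasCompactSupport ((isClosed_tsupport _).isCompact)

lemma bddAbove_range_aux (g : C(K, ℝ)) : BddAbove (Set.range fun t => g t) :=
  (isCompact_range g.continuous).bddAbove

lemma ciSup_add_aux (g : C(K, ℝ)) (c : ℝ) : (⨆ t, (g t + c)) = (⨆ t, g t) + c := by
  have bdd : BddAbove (Set.range fun t => g t + c) := by
    obtain ⟨B, hB⟩ := bddAbove_range_aux g
    exact ⟨B + c, by rintro x ⟨t, rfl⟩; exact add_le_add_left (hB ⟨t, rfl⟩) c⟩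
  refine le_antisymm (ciSup_le fun t => add_le_add_left (le_ciSup (bddAbove_range_aux g) t) c) ?_
  have : (⨆ t, g t) ≤ (⨆ t, (g t + c)) - c :=
    ciSup_le fun t => le_sub_iff_add_le.mpr (le_ciSup bdd t)
  linarith

/-- If two mutually singular finite measures on a compact metric space satisfy
`∫ h dq ≤ ∫ h dp` for all continuous `h` with `0 ≤ h ≤ 1`, then `q = 0`. -/
lemma neg_part_zero_aux (p q : Measure K) [IsFiniteMeasure p] [IsFiniteMeasure q]
    (hsing : p ⟂ₘ q)
    (hint : ∀ h : C(K, ℝ), (∀ t, 0 ≤ h t) → (∀ t, h t ≤ 1) →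
      (∫ t, h t ∂q) ≤ ∫ t, h t ∂p) : q = 0 := by
  obtain ⟨S, hS, hpS, hqSc⟩ := hsing
  have hqS : q S = 0 := by
    have key : ∀ ε : ℝ, 0 < ε → (q S).toReal ≤ 2 * ε := by
      intro ε hε
      obtain ⟨C, hCS, hCcomp, hqC⟩ := hS.exists_isCompact_lt_add (measure_ne_top q S)
        (ε := ENNReal.ofReal ε) (by simp [ENNReal.ofReal_pos, hε])
      have hpC : p C = 0 := measure_mono_null hCS hpS
      obtain ⟨U, hCU, hUopen, hpU⟩ := Set.exists_isOpen_lt_of_lt C (ENNReal.ofReal ε)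
        (by rw [hpC]; exact ENNReal.ofReal_pos.mpr hε)
      obtain ⟨φ, hφC, hφUc, hφ01⟩ := exists_continuous_zero_one_of_isCompact hCcomp
        hUopen.isClosed_compl (Set.disjoint_left.mpr fun x hx hxc => hxc (hCU hx))
      set h : C(K, ℝ) := 1 - φ with hh
      have h0 : ∀ t, 0 ≤ h t := fun t => by
        simp only [hh, ContinuousMap.sub_apply, ContinuousMap.one_apply]
        linarith [(hφ01 t).2]
      have h1 : ∀ t, h t ≤ 1 := fun t => by
        simp only [hh, ContinuousMap.sub_apply, ContinuousMap.one_apply]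
        linarith [(hφ01 t).1]
      have hhC : ∀ t ∈ C, h t = 1 := fun t ht => by
        simp only [hh, ContinuousMap.sub_apply, ContinuousMap.one_apply, hφC ht]
        simp
      have hhUc : ∀ t ∉ U, h t = 0 := fun t ht => by
        simp only [hh, ContinuousMap.sub_apply, ContinuousMap.one_apply, hφUc ht]
        simp
      have e1 : (q C).toReal ≤ ∫ t, h t ∂q := by
        have : (∫ t, C.indicator (fun _ => (1:ℝ)) t ∂q) ≤ ∫ t, h t ∂q := by
          refine integral_mono ((integrable_const (1:ℝ)).indicator hCcomp.measurableSet)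
            (cont_integrable_aux q _ h.continuous) fun t => ?_
          by_cases ht : t ∈ C
          · simp [Set.indicator_of_mem ht, hhC t ht]
          · simp [Set.indicator_of_notMem ht, h0 t]
        rwa [integral_indicator_const (1:ℝ) hCcomp.measurableSet, smul_eq_mul, mul_one] at this
      have e2 : (∫ t, h t ∂p) ≤ ε := by
        have hUmeas := hUopen.measurableSet
        have : (∫ t, h t ∂p) ≤ ∫ t, U.indicator (fun _ => (1:ℝ)) t ∂p := by
          refine integral_mono (cont_integrable_aux p _ h.continuous)
            ((integrable_const (1:ℝ)).indicator hUmeas) fun t => ?_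
          by_cases ht : t ∈ U
          · simpa [Set.indicator_of_mem ht] using h1 t
          · simp [Set.indicator_of_notMem ht, hhUc t ht]
        rw [integral_indicator_const (1:ℝ) hUmeas, smul_eq_mul, mul_one] at this
        exact this.trans (ENNReal.toReal_le_of_le_ofReal hε.le hpU.le)
      have e0 : (q S).toReal ≤ (q C).toReal + ε := by
        calc (q S).toReal ≤ (q C + ENNReal.ofReal ε).toReal :=
              ENNReal.toReal_mono (by finiteness) hqC.le
          _ = (q C).toReal + ε := by
              rw [ENNReal.toReal_add (measure_ne_top q C) ENNReal.ofReal_ne_top,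
                ENNReal.toReal_ofReal hε.le]
      have e3 := hint h h0 h1
      linarith
    have : (q S).toReal = 0 := by
      by_contra hne
      have hpos : 0 < (q S).toReal := lt_of_le_of_ne ENNReal.toReal_nonneg (Ne.symm hne)
      have := key ((q S).toReal / 4) (by linarith)
      linarith
    rcases (ENNReal.toReal_eq_zero_iff _).mp this with h | h
    · exact h
    · exact absurd h (measure_ne_top q S)
  have : q Set.univ = 0 := by
    rw [← measure_add_measure_compl hS, hqS, hqSc, add_zero]
  exact Measure.measure_univ_eq_zero.mp this

end Aux

/-- `∂(max)(f) = P(Argmax f)`: a finite signed Borel measure `μ` on a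
nonempty compact metric space `K` satisfies the subgradient inequality
`max g - max f ≥ ∫ (g - f) dμ` for all `g ∈ C(K, ℝ)` if and only if `μ` is a Borel
probability measure concentrated on the arg-maximum set `K_f = {t | f t = max f}`. -/
theorem signedMeasure_subgradient_iff_probability_on_argmax
    {K : Type*} [MetricSpace K] [CompactSpace K] [Nonempty K]
    [MeasurableSpace K] [BorelSpace K]
    (f : C(K, ℝ)) (μ : SignedMeasure K) :
    (∀ g : C(K, ℝ),
        (⨆ t, g t) - (⨆ t, f t) ≥ μ.sintegral (fun t => g t - f t)) ↔
      (∀ A : Set K, MeasurableSet A → 0 ≤ μ A) ∧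
        μ Set.univ = 1 ∧ μ {t | f t = ⨆ s, f s} = 1 := by
  set p := μ.toJordanDecomposition.posPart with hp
  set ν := μ.toJordanDecomposition.negPart with hν
  set M := ⨆ s, f s with hM
  have hKfmeas : MeasurableSet {t : K | f t = M} :=
    (isClosed_eq f.continuous continuous_const).measurableSet
  constructor
  · intro H
    -- Step A: ∫ h dν ≤ ∫ h dp for continuous h ≥ 0
    have key : ∀ h : C(K, ℝ), (∀ t, 0 ≤ h t) →
        (∫ t, h t ∂ν) ≤ ∫ t, h t ∂p := by
      intro h h0
      have h1 := H (f - h)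
      have hfun : (fun t => (f - h) t - f t) = fun t => -(h t) := by
        funext t; simp only [ContinuousMap.sub_apply]; ring
      rw [ge_iff_le, SignedMeasure.sintegral, hfun, ← hp, ← hν, integral_neg, integral_neg] at h1
      have hle : (⨆ t, (f - h) t) ≤ M :=
        ciSup_mono (bddAbove_range_aux f) fun t => by
          simp only [ContinuousMap.sub_apply]; linarith [h0 t]
      linarith
    -- Step B: ν = 0
    have hν0 : ν = 0 :=
      neg_part_zero_aux p ν μ.toJordanDecomposition.mutuallySingular
        fun h h0 _ => key h h0
    -- Step D : (p univ).toReal = 1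
    have hpuniv : (p Set.univ).toReal = 1 := by
      have h1 := H (f + 1)
      have h2 := H (f - 1)
      have e1 : (fun t => (f + 1) t - f t) = fun _ => (1:ℝ) := by
        funext t; simp only [ContinuousMap.add_apply, ContinuousMap.one_apply]; ring
      have e2 : (fun t => (f - 1) t - f t) = fun _ => (-1:ℝ) := by
        funext t; simp only [ContinuousMap.sub_apply, ContinuousMap.one_apply]; ring
      rw [ge_iff_le, SignedMeasure.sintegral, e1, ← hp, ← hν, hν0] at h1
      rw [ge_iff_le, SignedMeasure.sintegral, e2, ← hp, ← hν, hν0] at h2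
      simp only [integral_zero_measure, integral_const, smul_eq_mul, mul_one, sub_zero,
        mul_neg, Measure.coe_zero, Pi.zero_apply, ENNReal.toReal_zero, sub_zero, measureReal_def] at h1 h2
      have s1 : (⨆ t, (f + 1) t) = M + 1 := by
        simp only [ContinuousMap.add_apply, ContinuousMap.one_apply]
        exact ciSup_add_aux f 1
      have s2 : (⨆ t, (f - 1) t) = M + (-1) := by
        simp only [ContinuousMap.sub_apply, ContinuousMap.one_apply, sub_eq_add_neg]
        exact ciSup_add_aux f (-1)
      rw [s1] at h1
      rw [s2] at h2
      linarith
    have hμuniv : μ Set.univ = 1 := by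
      rw [sm_apply_aux μ MeasurableSet.univ, ← hp, ← hν, hν0]
      simp [hpuniv]
    -- Step E : concentration on argmax
    have hfint : (∫ t, f t ∂p) = M := by
      have h0 := H 0
      have e0 : (fun t => (0 : C(K, ℝ)) t - f t) = fun t => -(f t) := by
        funext t; simp only [ContinuousMap.zero_apply]; ring
      rw [ge_iff_le, SignedMeasure.sintegral, e0, ← hp, ← hν, hν0] at h0
      simp only [integral_zero_measure, integral_neg, sub_zero] at h0
      have s0 : (⨆ t, (0 : C(K, ℝ)) t) = 0 := by
        simp only [ContinuousMap.zero_apply]; exact ciSup_const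
      rw [s0] at h0
      have hub : (∫ t, f t ∂p) ≤ M := by
        have : (∫ t, f t ∂p) ≤ ∫ _, M ∂p :=
          integral_mono (cont_integrable_aux p _ f.continuous) (integrable_const M)
            fun t => le_ciSup (bddAbove_range_aux f) t
        simpa [integral_const, measureReal_def, hpuniv] using this
      linarith
    have hφ : ∀ᵐ t ∂p, M - f t = 0 := by
      have hnn : (0 : K → ℝ) ≤ fun t => M - f t := fun t => by
        simp only [Pi.zero_apply, sub_nonneg]
        exact le_ciSup (bddAbove_range_aux f) t
      have hintφ : Integrable (fun t => M - f t) p :=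
        cont_integrable_aux p _ (continuous_const.sub f.continuous)
      have hz : (∫ t, (M - f t) ∂p) = 0 := by
        rw [integral_sub (integrable_const M) (cont_integrable_aux p _ f.continuous), hfint,
          integral_const, measureReal_def, hpuniv]
        simp
      exact (integral_eq_zero_iff_of_nonneg hnn hintφ).mp hz
    have hcompl : p {t : K | f t = M}ᶜ = 0 := by
      have h' : p {t : K | ¬ (M - f t = 0)} = 0 := by
        have := hφ; rwa [ae_iff] at this
      have hset : {t : K | f t = M}ᶜ = {t : K | ¬ (M - f t = 0)} := by
        ext t
        simp only [Set.mem_compl_iff, Set.mem_setOf_eq, sub_eq_zero]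
        exact not_congr eq_comm
      rw [hset]; exact h'
    have hpKf : p {t : K | f t = M} = 1 := by
      have hsum := measure_add_measure_compl (μ := p) hKfmeas
      rw [hcompl, add_zero] at hsum
      rw [hsum, ← ENNReal.toReal_eq_one_iff, hpuniv]
    refine ⟨fun A hA => ?_, hμuniv, ?_⟩
    · rw [sm_apply_aux μ hA, ← hp, ← hν, hν0]
      simp
    · rw [sm_apply_aux μ hKfmeas, ← hp, ← hν, hν0, hpKf]
      simp
  · rintro ⟨hpos, huniv, hKf⟩ g
    obtain ⟨S, hS, hpS, hqSc⟩ := μ.toJordanDecomposition.mutuallySingular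
    have hνS : ν S = 0 := by
      have h1 := hpos S hS
      rw [sm_apply_aux μ hS, ← hp, ← hν, hpS] at h1
      simp only [ENNReal.toReal_zero, zero_sub, neg_nonneg] at h1
      have : (ν S).toReal = 0 := le_antisymm h1 ENNReal.toReal_nonneg
      rcases (ENNReal.toReal_eq_zero_iff _).mp this with h | h
      · exact h
      · exact absurd h (measure_ne_top ν S)
    have hν0 : ν = 0 := by
      refine Measure.measure_univ_eq_zero.mp ?_
      rw [← measure_add_measure_compl hS, hνS, hqSc, add_zero]
    have hpuniv : (p Set.univ).toReal = 1 := by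
      have h := huniv
      rw [sm_apply_aux μ MeasurableSet.univ, ← hp, ← hν, hν0] at h
      simpa using h
    have hpKf : (p {t : K | f t = M}).toReal = 1 := by
      have h := hKf
      rw [sm_apply_aux μ hKfmeas, ← hp, ← hν, hν0] at h
      simpa using h
    have hcompl : p {t : K | f t = M}ᶜ = 0 := by
      have h1 : p {t : K | f t = M} = 1 := by
        rw [← ENNReal.toReal_eq_one_iff, hpKf]
      have h2 : p Set.univ = 1 := by
        rw [← ENNReal.toReal_eq_one_iff, hpuniv]
      have hsum := measure_add_measure_compl (μ := p) hKfmeas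
      rw [h1, h2] at hsum
      have : (1 : ENNReal) + p {t : K | f t = M}ᶜ = 1 + 0 := by rw [add_zero]; exact hsum
      exact (ENNReal.add_right_inj ENNReal.one_ne_top).mp this
    have hae : ∀ᵐ t ∂p, f t = M := by
      rw [ae_iff]
      exact hcompl
    have hgoal : (∫ t, (g t - f t) ∂p) ≤ (⨆ t, g t) - M := by
      have hint1 : Integrable (fun t => g t - f t) p :=
        cont_integrable_aux p _ (g.continuous.sub f.continuous)
      have : (∫ t, (g t - f t) ∂p) ≤ ∫ _, ((⨆ t, g t) - M) ∂p := by
        refine integral_mono_ae hint1 (integrable_const _) ?_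
        filter_upwards [hae] with t ht
        have := le_ciSup (bddAbove_range_aux g) t
        rw [ht]
        linarith
      simpa [integral_const, measureReal_def, hpuniv] using this
    rw [ge_iff_le, SignedMeasure.sintegral, ← hp, ← hν, hν0]
    simpa [integral_zero_measure] using hgoal
end
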